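/- Let Ω ⊆ ℝ^d be a connected open set and f : Ω → Ω a C²-map such that f^n = id for some positive integer n, and f admits a fixed point X ∈ Ω at which the derivative df_X is the identity. Then f = id on Ω. -/

import Mathlib

open Set Metric Filter

section LocalLemma

variable {E : Type*} [NormedAddCommGroup E] [NormedSpace ℝ E]

/-- Local rigidity: if `f` is differentiable on an open set `s`, `f^[n] = id` on `s`,
`f x₀ = x₀`, and `fderiv f` is `A`-Lipschitz-controlled around `x₀` with value `id` at `x₀`,
then `f = id` on a small closed ball around `x₀`. -/
lemma local_id {f : E → E} {s : Set E} (hdiff : ∀ y ∈ s, DifferentiableAt ℝ f y)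
    {x₀ : E} {A R : ℝ} (hA : 0 ≤ A) (hR : 0 < R) (hball : ball x₀ R ⊆ s)
    (hlip : ∀ y ∈ ball x₀ R, ‖fderiv ℝ f y - ContinuousLinearMap.id ℝ E‖ ≤ A * ‖y - x₀‖)
    {n : ℕ} (hn : 0 < n) (hiter : ∀ y ∈ s, f^[n] y = y)
    (hfx : f x₀ = x₀) :
    ∀ y ∈ closedBall x₀ (min (R/3) (1/(8*(A+1)*n))), f y = y := by
  set r : ℝ := min (R/3) (1/(8*(A+1)*n)) with hr_def
  have hApos : (0:ℝ) < A + 1 := by linarith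
  have hnpos : (0:ℝ) < n := by exact_mod_cast hn
  have hr0 : 0 < r := lt_min (by linarith) (by positivity)
  have hrR : 2 * r < R := by
    have : r ≤ R / 3 := min_le_left _ _
    linarith
  have hrn : 8 * (A+1) * n * r ≤ 1 := by
    have : r ≤ 1/(8*(A+1)*n) := min_le_right _ _
    have h8 : (0:ℝ) < 8*(A+1)*n := by positivity
    calc 8*(A+1)*n*r ≤ 8*(A+1)*n*(1/(8*(A+1)*n)) := by
          exact mul_le_mul_of_nonneg_left this (le_of_lt h8)
      _ = 1 := by field_simp
  set δ : ℝ := A * (2*r) with hδ_def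
  have hδ0 : 0 ≤ δ := by positivity
  have hδn : δ * n ≤ 1/4 := by
    have hAle : A ≤ A + 1 := by linarith
    have : A * (2*r) * n ≤ (A+1) * (2*r) * n := by
      have : 0 ≤ 2*r*n := by positivity
      nlinarith
    nlinarith
  set u : E → E := fun y => f y - y with hu_def
  have hcb : closedBall x₀ (2*r) ⊆ ball x₀ R := by
    intro y hy
    simp only [mem_closedBall] at hy
    simp only [mem_ball]
    linarith
  have hcbs : closedBall x₀ (2*r) ⊆ s := hcb.trans hball
  -- mean value inequality for u on the closed ball
  have key : ∀ y ∈ closedBall x₀ (2*r), ∀ z ∈ closedBall x₀ (2*r),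
      ‖u y - u z‖ ≤ δ * ‖y - z‖ := by
    intro y hy z hz
    have hdiffu : ∀ w ∈ closedBall x₀ (2*r), DifferentiableAt ℝ u w := by
      intro w hw
      exact (hdiff w (hcbs hw)).sub differentiableAt_fun_id
    have hbound : ∀ w ∈ closedBall x₀ (2*r), ‖fderiv ℝ u w‖ ≤ δ := by
      intro w hw
      have hW : fderiv ℝ u w = fderiv ℝ f w - ContinuousLinearMap.id ℝ E := by
        rw [hu_def]
        rw [fderiv_fun_sub (hdiff w (hcbs hw)) differentiableAt_fun_id]
        simp [fderiv_id']
      rw [hW]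
      calc ‖fderiv ℝ f w - ContinuousLinearMap.id ℝ E‖ ≤ A * ‖w - x₀‖ :=
            hlip w (hcb hw)
        _ ≤ A * (2*r) := by
            apply mul_le_mul_of_nonneg_left _ hA
            rw [← dist_eq_norm]
            exact mem_closedBall.mp hw
    exact (convex_closedBall x₀ (2*r)).norm_image_sub_le_of_norm_fderiv_le
      hdiffu hbound hz hy
  have hux₀ : u x₀ = 0 := by simp [hu_def, hfx]
  -- now fix x
  intro x hx
  have hx2 : x ∈ closedBall x₀ (2*r) := by
    apply closedBall_subset_closedBall _ hx
    linarith
  have hx₀2 : x₀ ∈ closedBall x₀ (2*r) := by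
    simp only [mem_closedBall, dist_self]; linarith
  have hux_le : ‖u x‖ ≤ δ * r := by
    have := key x hx2 x₀ hx₀2
    rw [hux₀, sub_zero] at this
    calc ‖u x‖ ≤ δ * ‖x - x₀‖ := this
      _ ≤ δ * r := by
          apply mul_le_mul_of_nonneg_left _ hδ0
          rw [← dist_eq_norm]; exact mem_closedBall.mp hx
  -- induction on iterates
  have key2 : ∀ k, k ≤ n → ‖f^[k] x - x‖ ≤ 2*k*‖u x‖ ∧ f^[k] x ∈ closedBall x₀ (2*r) := by
    intro k
    induction k with
    | zero => intro _; constructor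
              · simp
              · exact hx2
    | succ k ih =>
      intro hk1
      obtain ⟨h1, h2⟩ := ih (Nat.le_of_succ_le hk1)
      have hkn : (k:ℝ) ≤ n := by exact_mod_cast Nat.le_of_succ_le hk1
      have huk : ‖u (f^[k] x)‖ ≤ 2 * ‖u x‖ := by
        have hd := key (f^[k] x) h2 x hx2
        have : ‖u (f^[k] x)‖ ≤ ‖u x‖ + δ * ‖f^[k] x - x‖ := by
          calc ‖u (f^[k] x)‖ ≤ ‖u x‖ + ‖u (f^[k] x) - u x‖ := by
                have := norm_add_le (u x) (u (f^[k] x) - u x)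
                simpa using this
            _ ≤ ‖u x‖ + δ * ‖f^[k] x - x‖ := by linarith
        have hδk : δ * ‖f^[k] x - x‖ ≤ ‖u x‖ := by
          calc δ * ‖f^[k] x - x‖ ≤ δ * (2*k*‖u x‖) :=
                mul_le_mul_of_nonneg_left h1 hδ0
            _ = (δ * k) * (2 * ‖u x‖) := by ring
            _ ≤ (1/4) * (2 * ‖u x‖) := by
                apply mul_le_mul_of_nonneg_right _ (by positivity)
                calc δ * k ≤ δ * n := mul_le_mul_of_nonneg_left hkn hδ0
                  _ ≤ 1/4 := hδn
            _ ≤ ‖u x‖ := by nlinarith [norm_nonneg (u x)]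
        linarith
      have hstep : f^[k+1] x - x = (f^[k] x - x) + u (f^[k] x) := by
        rw [Function.iterate_succ_apply']
        simp only [hu_def]
        abel
      have h3 : ‖f^[k+1] x - x‖ ≤ 2*(k:ℝ)*‖u x‖ + 2*‖u x‖ := by
        rw [hstep]
        calc ‖(f^[k] x - x) + u (f^[k] x)‖ ≤ ‖f^[k] x - x‖ + ‖u (f^[k] x)‖ :=
              norm_add_le _ _
          _ ≤ 2*(k:ℝ)*‖u x‖ + 2*‖u x‖ := by linarith
      constructor
      · push_cast
        linarith
      · simp only [mem_closedBall]
        have hk1n : ((k:ℝ)+1) ≤ n := by exact_mod_cast hk1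
        have h4 : 2*((k:ℝ)+1)*‖u x‖ ≤ 2*n*(δ*r) := by
          have h5 : 2*((k:ℝ)+1)*‖u x‖ ≤ 2*n*‖u x‖ := by
            apply mul_le_mul_of_nonneg_right _ (norm_nonneg _)
            linarith
          have h6 : 2*(n:ℝ)*‖u x‖ ≤ 2*n*(δ*r) := by
            apply mul_le_mul_of_nonneg_left hux_le (by positivity)
          linarith
        have h7 : 2*(n:ℝ)*(δ*r) ≤ r/2 := by
          have : δ * n ≤ 1/4 := hδn
          nlinarith
        calc dist (f^[k+1] x) x₀ ≤ dist (f^[k+1] x) x + dist x x₀ := dist_triangle _ _ _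
          _ ≤ (2*(k:ℝ)*‖u x‖ + 2*‖u x‖) + r := by
              rw [dist_eq_norm]
              have := mem_closedBall.mp hx
              linarith
          _ ≤ r/2 + r := by linarith
          _ ≤ 2*r := by linarith
  -- telescoping sum
  have htel : ∑ k ∈ Finset.range n, u (f^[k] x) = 0 := by
    have heq : ∀ k, u (f^[k] x) = f^[k+1] x - f^[k] x := by
      intro k
      rw [Function.iterate_succ_apply']
    calc ∑ k ∈ Finset.range n, u (f^[k] x)
        = ∑ k ∈ Finset.range n, (f^[k+1] x - f^[k] x) := by
          exact Finset.sum_congr rfl (fun k _ => heq k)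
      _ = f^[n] x - f^[0] x := Finset.sum_range_sub (fun k => f^[k] x) n
      _ = 0 := by
          rw [hiter x (hball (hcb hx2))]
          simp
  have hsum : (n : ℕ) • u x = ∑ k ∈ Finset.range n, (u x - u (f^[k] x)) := by
    rw [Finset.sum_sub_distrib, htel, sub_zero, Finset.sum_const, Finset.card_range]
  have hbound : (n:ℝ) * ‖u x‖ ≤ (n:ℝ) * ((1/2) * ‖u x‖) := by
    have h1 : ‖(n:ℕ) • u x‖ = (n:ℝ) * ‖u x‖ := by
      rw [← Nat.cast_smul_eq_nsmul ℝ, norm_smul, Real.norm_natCast]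
    calc (n:ℝ) * ‖u x‖ = ‖(n:ℕ) • u x‖ := h1.symm
      _ = ‖∑ k ∈ Finset.range n, (u x - u (f^[k] x))‖ := by rw [hsum]
      _ ≤ ∑ k ∈ Finset.range n, ‖u x - u (f^[k] x)‖ := norm_sum_le _ _
      _ ≤ ∑ _k ∈ Finset.range n, ((1/2) * ‖u x‖) := by
          apply Finset.sum_le_sum
          intro k hk
          obtain ⟨h1k, h2k⟩ := key2 k (le_of_lt (Finset.mem_range.mp hk))
          have hkn : (k:ℝ) ≤ n := by
            exact_mod_cast le_of_lt (Finset.mem_range.mp hk)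
          calc ‖u x - u (f^[k] x)‖ ≤ δ * ‖x - f^[k] x‖ := key x hx2 _ h2k
            _ = δ * ‖f^[k] x - x‖ := by rw [norm_sub_rev]
            _ ≤ δ * (2*k*‖u x‖) := mul_le_mul_of_nonneg_left h1k hδ0
            _ = (δ * k) * 2 * ‖u x‖ := by ring
            _ ≤ (1/4) * 2 * ‖u x‖ := by
                apply mul_le_mul_of_nonneg_right _ (norm_nonneg _)
                apply mul_le_mul_of_nonneg_right _ (by norm_num)
                calc δ * k ≤ δ * n := mul_le_mul_of_nonneg_left hkn hδ0
                  _ ≤ 1/4 := hδn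
            _ = (1/2) * ‖u x‖ := by ring
      _ = (n:ℝ) * ((1/2) * ‖u x‖) := by
          rw [Finset.sum_const, Finset.card_range, nsmul_eq_mul]
  have hux0 : ‖u x‖ ≤ 0 := by nlinarith [norm_nonneg (u x)]
  have : u x = 0 := by
    have := le_antisymm hux0 (norm_nonneg _)
    exact norm_eq_zero.mp this
  have hfsub : f x - x = 0 := this
  exact sub_eq_zero.mp hfsub

end LocalLemma

/-- If `Ω ⊆ ℝ^d` is a connected open set, `f : Ω → Ω` is `C²`,
`f^n = id` on `Ω` for some positive `n`, and `f` has a fixed point `X ∈ Ω` with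
`df_X = Id`, then `f = id` on `Ω`. -/
theorem stmt0 {d : ℕ} (hd : 1 ≤ d) {Ω : Set (EuclideanSpace ℝ (Fin d))}
    (hΩo : IsOpen Ω) (hΩc : IsConnected Ω)
    {f : EuclideanSpace ℝ (Fin d) → EuclideanSpace ℝ (Fin d)}
    (hmaps : MapsTo f Ω Ω) (hC2 : ContDiffOn ℝ 2 f Ω)
    {n : ℕ} (hn : 0 < n) (hiter : ∀ x ∈ Ω, f^[n] x = x)
    {X : EuclideanSpace ℝ (Fin d)} (hX : X ∈ Ω) (hfX : f X = X)
    (hdf : fderiv ℝ f X = ContinuousLinearMap.id ℝ (EuclideanSpace ℝ (Fin d))) :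
    EqOn f id Ω := by
  -- basic regularity facts
  have hdiff : ∀ y ∈ Ω, DifferentiableAt ℝ f y := by
    intro y hy
    exact (hC2.differentiableOn two_ne_zero).differentiableAt (hΩo.mem_nhds hy)
  have hC1 : ContDiffOn ℝ 1 (fderiv ℝ f) Ω := hC2.fderiv_of_isOpen hΩo (by norm_num)
  have hcontd : ∀ y ∈ Ω, ContinuousAt (fderiv ℝ f) y := by
    intro y hy
    exact hC1.continuousOn.continuousAt (hΩo.mem_nhds hy)
  have hcontf : ∀ y ∈ Ω, ContinuousAt f y := by
    intro y hy
    exact hC2.continuousOn.continuousAt (hΩo.mem_nhds hy)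
  -- local rigidity at every suitable point
  have localLem : ∀ x ∈ Ω, f x = x →
      fderiv ℝ f x = ContinuousLinearMap.id ℝ (EuclideanSpace ℝ (Fin d)) →
      ∃ ε > 0, Metric.ball x ε ⊆ Ω ∧ EqOn f id (Metric.ball x ε) := by
    intro x hx hfx hdfx
    have hC1x : ContDiffAt ℝ 1 (fderiv ℝ f) x := hC1.contDiffAt (hΩo.mem_nhds hx)
    obtain ⟨K, t, ht, hK⟩ := hC1x.exists_lipschitzOnWith
    have htΩ : t ∩ Ω ∈ nhds x := Filter.inter_mem ht (hΩo.mem_nhds hx)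
    obtain ⟨R, hR0, hRsub⟩ := Metric.mem_nhds_iff.mp htΩ
    have hxt : x ∈ t := mem_of_mem_nhds ht
    have hball : Metric.ball x R ⊆ Ω := fun y hy => (hRsub hy).2
    have hlip : ∀ y ∈ Metric.ball x R,
        ‖fderiv ℝ f y - ContinuousLinearMap.id ℝ (EuclideanSpace ℝ (Fin d))‖ ≤ (K:ℝ) * ‖y - x‖ := by
      intro y hy
      have hyt : y ∈ t := (hRsub hy).1
      have := hK.dist_le_mul y hyt x hxt
      rw [dist_eq_norm, dist_eq_norm] at this
      rwa [hdfx] at this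
    have := local_id hdiff (K.coe_nonneg) hR0 hball hlip hn hiter hfx
    set ε : ℝ := min (R/3) (1/(8*((K:ℝ)+1)*n)) with hε_def
    have hε0 : 0 < ε := by
      apply lt_min (by linarith)
      have : (0:ℝ) < (K:ℝ) + 1 := by positivity
      positivity
    refine ⟨ε, hε0, ?_, ?_⟩
    · intro y hy
      apply hball
      have : ε ≤ R/3 := min_le_left _ _
      simp only [Metric.mem_ball] at hy ⊢
      linarith
    · intro y hy
      exact this y (Metric.ball_subset_closedBall hy)
  -- the set of points near which f = id
  set S : Set (EuclideanSpace ℝ (Fin d)) := {x | x ∈ Ω ∧ ∃ ε > 0, Metric.ball x ε ⊆ Ω ∧ EqOn f id (Metric.ball x ε)}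
    with hS_def
  have hS_fix : ∀ x ∈ S, f x = x := by
    rintro x ⟨hxΩ, ε, hε0, _, heq⟩
    exact heq (Metric.mem_ball_self hε0)
  have hS_deriv : ∀ x ∈ S, fderiv ℝ f x = ContinuousLinearMap.id ℝ (EuclideanSpace ℝ (Fin d)) := by
    rintro x ⟨hxΩ, ε, hε0, _, heq⟩
    have hev : f =ᶠ[nhds x] id :=
      Filter.eventuallyEq_of_mem (Metric.ball_mem_nhds x hε0) heq
    rw [hev.fderiv_eq]
    exact fderiv_id'
  have hSopen : IsOpen S := by
    rw [Metric.isOpen_iff]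
    rintro x ⟨hxΩ, ε, hε0, hsub, heq⟩
    refine ⟨ε, hε0, ?_⟩
    intro y hy
    refine ⟨hsub hy, ε - dist y x, by simp [Metric.mem_ball] at hy; linarith, ?_, ?_⟩
    · exact (Metric.ball_subset_ball' (by linarith)).trans hsub
    · intro z hz
      apply heq
      have : dist z x ≤ dist z y + dist y x := dist_triangle _ _ _
      simp only [Metric.mem_ball] at hz hy ⊢
      linarith
  have hXS : X ∈ S := by
    obtain ⟨ε, hε0, hsub, heq⟩ := localLem X hX hfX hdf
    exact ⟨hX, ε, hε0, hsub, heq⟩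
  -- S is relatively closed in Ω
  have hclosed : ∀ x ∈ Ω, x ∈ closure S → x ∈ S := by
    intro x hxΩ hxcl
    haveI : Filter.NeBot (nhdsWithin x S) :=
      mem_closure_iff_nhdsWithin_neBot.mp hxcl
    have hfS : ∀ᶠ y in nhdsWithin x S, f y = y :=
      Filter.eventually_of_mem self_mem_nhdsWithin hS_fix
    have hfx : f x = x := by
      have h1 : Filter.Tendsto f (nhdsWithin x S) (nhds (f x)) :=
        ((hcontf x hxΩ).continuousWithinAt).tendsto
      have h2 : Filter.Tendsto f (nhdsWithin x S) (nhds x) := by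
        apply Filter.Tendsto.congr' _ (tendsto_id.mono_left nhdsWithin_le_nhds)
        filter_upwards [hfS] with y hy using hy.symm
      exact tendsto_nhds_unique h1 h2
    have hdS : ∀ᶠ y in nhdsWithin x S,
        fderiv ℝ f y = ContinuousLinearMap.id ℝ (EuclideanSpace ℝ (Fin d)) :=
      Filter.eventually_of_mem self_mem_nhdsWithin hS_deriv
    have hdx : fderiv ℝ f x = ContinuousLinearMap.id ℝ (EuclideanSpace ℝ (Fin d)) := by
      have h1 : Filter.Tendsto (fderiv ℝ f) (nhdsWithin x S) (nhds (fderiv ℝ f x)) :=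
        ((hcontd x hxΩ).continuousWithinAt).tendsto
      have h2 : Filter.Tendsto (fderiv ℝ f) (nhdsWithin x S)
          (nhds (ContinuousLinearMap.id ℝ (EuclideanSpace ℝ (Fin d)))) := by
        apply Filter.Tendsto.congr' _ tendsto_const_nhds
        filter_upwards [hdS] with y hy using hy.symm
      exact tendsto_nhds_unique h1 h2
    obtain ⟨ε, hε0, hsub, heq⟩ := localLem x hxΩ hfx hdx
    exact ⟨hxΩ, ε, hε0, hsub, heq⟩
  -- clopen argument
  have hΩS : Ω ⊆ S := by
    have hsub : Ω ⊆ S ∪ (closure S)ᶜ := by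
      intro x hx
      by_cases h : x ∈ closure S
      · exact Or.inl (hclosed x hx h)
      · exact Or.inr h
    have hdisj : Disjoint S (closure S)ᶜ :=
      Set.disjoint_compl_right_iff_subset.mpr subset_closure
    exact hΩc.isPreconnected.subset_left_of_subset_union hSopen
      isClosed_closure.isOpen_compl hdisj hsub ⟨X, hX, hXS⟩
  intro x hx
  exact hS_fix x (hΩS hx)
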